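/- In the generalized quaternion algebra H(β₁,β₂) over ℝ, the alternating sum ∑_{m=1}^{n} (-1)^{m+1} F_m of Fibonacci quaternions equals (-1)^{n+1} F_{n-1} + 1 + e₃ + e₄, for all n ≥ 1. -/

import Mathlib

open scoped Quaternion

/-- The `n`th Fibonacci quaternion in the generalized quaternion algebra
`H(β₁, β₂) = ℍ[ℝ, -β₁, -β₂]` (so that `e₂² = -β₁`, `e₃² = -β₂`). -/
def fibQuat (β₁ β₂ : ℝ) (n : ℕ) : ℍ[ℝ, -β₁, -β₂] :=
  ⟨Nat.fib n, Nat.fib (n + 1), Nat.fib (n + 2), Nat.fib (n + 3)⟩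

lemma fibQuat_add (β₁ β₂ : ℝ) (k : ℕ) :
    fibQuat β₁ β₂ k + fibQuat β₁ β₂ (k + 1) = fibQuat β₁ β₂ (k + 2) := by
  ext <;> simp [fibQuat] <;> exact_mod_cast (Nat.fib_add_two).symm

theorem fibQuat_alternating_sum (β₁ β₂ : ℝ) (n : ℕ) (hn : 1 ≤ n) :
    ∑ m ∈ Finset.Icc 1 n, (-1 : ℍ[ℝ, -β₁, -β₂]) ^ (m + 1) * fibQuat β₁ β₂ m =
      (-1 : ℍ[ℝ, -β₁, -β₂]) ^ (n + 1) * fibQuat β₁ β₂ (n - 1) + 1 +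
        (⟨0, 0, 1, 0⟩ : ℍ[ℝ, -β₁, -β₂]) + (⟨0, 0, 0, 1⟩ : ℍ[ℝ, -β₁, -β₂]) := by
  induction n, hn using Nat.le_induction with
  | base =>
    ext <;> simp [fibQuat] <;> norm_num
  | succ n hn ih =>
    rw [Finset.sum_Icc_succ_top (by omega : 1 ≤ n + 1), ih]
    obtain ⟨k, rfl⟩ : ∃ k, n = k + 1 := ⟨n - 1, by omega⟩
    simp only [Nat.add_sub_cancel]
    rw [← fibQuat_add β₁ β₂ k]
    have h3 : ((-1 : ℍ[ℝ, -β₁, -β₂]) ^ (k + 1 + 1 + 1)) = -((-1) ^ (k + 1 + 1)) := by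
      rw [pow_succ, mul_neg_one]
    rw [h3]
    noncomm_ring
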